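/- Let K ⊆ ℂ be a subfield, m ≥ 3 an integer, and ζ a root of unity with ζ^m ∈ K and [K(ζ):K] = m. Let ω₁,ω₂,ω₃,ω₄ be roots of unity lying in K and k₁,k₂,k₃,k₄ ∈ {0,…,m−1} with gcd(kᵢ,m) = 1 for some i, k₁+k₂ ≡ k₃+k₄ (mod m), ω₃ζ^{k₃} ≠ 1, ω₄ζ^{k₄} ≠ 1, and suppose a := ((1−ω₁ζ^{k₁})(1−ω₂ζ^{k₂}))/((1−ω₃ζ^{k₃})(1−ω₄ζ^{k₄})) lies in K and is a nonzero real number different from 1 and −1. Then a ∈ {1/2, 2}. -/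

import Mathlib

open Polynomial in
lemma li_aux (K : IntermediateField ℚ ℂ) (m : ℕ) (ζ : ℂ)
    (hζ : ∃ n : ℕ, 0 < n ∧ ζ ^ n = 1)
    (hdeg : Module.finrank K (IntermediateField.adjoin K {ζ}) = m)
    (b : ℕ → ℂ) (hb : ∀ j, b j ∈ K)
    (hsum : ∑ j ∈ Finset.range m, b j * ζ ^ j = 0) : ∀ j < m, b j = 0 := by
  obtain ⟨n, hn, h1⟩ := hζ
  have hint : IsIntegral K ζ := by
    refine ⟨X ^ n - C 1, monic_X_pow_sub_C 1 hn.ne', ?_⟩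
    simp [h1]
  have hmin : (minpoly K ζ).natDegree = m := by
    rw [← IntermediateField.adjoin.finrank hint, hdeg]
  set p : Polynomial K := ∑ j ∈ Finset.range m, C (⟨b j, hb j⟩ : K) * X ^ j with hp
  have haev : Polynomial.aeval ζ p = 0 := by
    rw [hp]
    simp only [map_sum, map_mul, aeval_C, aeval_X_pow]
    rw [← hsum]; rfl
  have hp0 : p = 0 := by
    by_contra h
    have := minpoly.degree_le_of_ne_zero K ζ h haev
    have h2 : p.degree < (minpoly K ζ).degree := by
      rw [degree_eq_natDegree (minpoly.ne_zero hint), hmin]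
      refine lt_of_le_of_lt (degree_sum_le _ _) ?_
      rw [Finset.sup_lt_iff (by exact_mod_cast WithBot.bot_lt_coe m)]
      intro j hj
      refine lt_of_le_of_lt (degree_C_mul_X_pow_le _ _) ?_
      exact_mod_cast Finset.mem_range.mp hj
    exact absurd this (not_le_of_gt h2)
  intro j hj
  have : p.coeff j = ⟨b j, hb j⟩ := by
    rw [hp, Polynomial.finset_sum_coeff]
    simp only [coeff_C_mul, coeff_X_pow, mul_ite, mul_one, mul_zero]
    rw [Finset.sum_ite_eq (Finset.range m) j]
    simp [hj]
  rw [hp0] at this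
  simpa using congrArg (Subtype.val) this.symm

lemma unit_facts {z : ℂ} (h : ∃ n : ℕ, 0 < n ∧ z ^ n = 1) :
    z ≠ 0 ∧ ‖z‖ = 1 ∧ (starRingEnd ℂ) z = z⁻¹ := by
  obtain ⟨n, hn, hz⟩ := h
  have hnorm : ‖z‖ = 1 := Complex.norm_eq_one_of_pow_eq_one hz hn.ne'
  have h0 : z ≠ 0 := by
    intro h; rw [h, norm_zero] at hnorm; norm_num at hnorm
  exact ⟨h0, hnorm, (Complex.inv_eq_conj hnorm).symm⟩

/-- If `1 - ω = a (1 - ω')` with `a` real, `a ≠ 0, 1`, `ω, ω'` on the unit circle,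
`ω' ≠ 1`, then contradiction. -/
lemma SL {a : ℝ} {ω ω' : ℂ}
    (hω0 : ω ≠ 0) (hωc : (starRingEnd ℂ) ω = ω⁻¹)
    (hω'0 : ω' ≠ 0) (hω'c : (starRingEnd ℂ) ω' = ω'⁻¹)
    (hω'1 : ω' ≠ 1) (ha0 : a ≠ 0) (ha1 : a ≠ 1)
    (h : 1 - ω = (a : ℝ) * (1 - ω')) : False := by
  have hc := congrArg (starRingEnd ℂ) h
  simp only [map_sub, map_one, map_mul, hωc, hω'c, Complex.conj_ofReal] at hc
  have h2 : (ω - 1) * ω' = (a : ℂ) * ((ω' - 1) * ω) := by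
    field_simp at hc
    linear_combination hc
  have h3 : ((a:ℂ) * (ω' - 1)) * ω' = ((a:ℂ) * (ω' - 1)) * ω := by
    linear_combination h2 + ω' * h
  have hωω' : ω' = ω := by
    refine mul_left_cancel₀ ?_ h3
    refine mul_ne_zero ?_ (sub_ne_zero.mpr hω'1)
    exact_mod_cast ha0
  rw [← hωω'] at h
  have h4 : ((a:ℂ) - 1) * (1 - ω') = 0 := by linear_combination -h
  rcases mul_eq_zero.mp h4 with h' | h'
  · exact ha1 (by exact_mod_cast sub_eq_zero.mp h')
  · exact hω'1 (sub_eq_zero.mp h').symm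

lemma conj_rel (ζ ω1 ω2 ω3 ω4 : ℂ) (a : ℝ) (k1 k2 k3 k4 : ℕ)
    (hζ0 : ζ ≠ 0) (hζc : (starRingEnd ℂ) ζ = ζ⁻¹)
    (h10 : ω1 ≠ 0) (h1c : (starRingEnd ℂ) ω1 = ω1⁻¹)
    (h20 : ω2 ≠ 0) (h2c : (starRingEnd ℂ) ω2 = ω2⁻¹)
    (h30 : ω3 ≠ 0) (h3c : (starRingEnd ℂ) ω3 = ω3⁻¹)
    (h40 : ω4 ≠ 0) (h4c : (starRingEnd ℂ) ω4 = ω4⁻¹)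
    (hP0 : (1 - ω1 * ζ ^ k1) * (1 - ω2 * ζ ^ k2) ≠ 0)
    (hE : (a : ℂ) * ((1 - ω3 * ζ ^ k3) * (1 - ω4 * ζ ^ k4))
        = (1 - ω1 * ζ ^ k1) * (1 - ω2 * ζ ^ k2)) :
    ω1 * ω2 * (ζ ^ k1 * ζ ^ k2) = ω3 * ω4 * (ζ ^ k3 * ζ ^ k4) := by
  have hik : ∀ k : ℕ, ζ⁻¹ ^ k * ζ ^ k = 1 := fun k => by
    rw [← mul_pow, inv_mul_cancel₀ hζ0, one_pow]
  have hi1 : ω1⁻¹ * ω1 = 1 := inv_mul_cancel₀ h10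
  have hi2 : ω2⁻¹ * ω2 = 1 := inv_mul_cancel₀ h20
  have hi3 : ω3⁻¹ * ω3 = 1 := inv_mul_cancel₀ h30
  have hi4 : ω4⁻¹ * ω4 = 1 := inv_mul_cancel₀ h40
  have hc := congrArg (starRingEnd ℂ) hE
  simp only [map_mul, map_sub, map_one, map_pow, hζc, h1c, h2c, h3c, h4c,
    Complex.conj_ofReal] at hc
  have e1 : (1 - ω1⁻¹ * ζ⁻¹ ^ k1) * (ω1 * ζ ^ k1) = -(1 - ω1 * ζ ^ k1) := by
    linear_combination (-(ζ⁻¹ ^ k1 * ζ ^ k1)) * hi1 + (-1 : ℂ) * hik k1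
  have e2 : (1 - ω2⁻¹ * ζ⁻¹ ^ k2) * (ω2 * ζ ^ k2) = -(1 - ω2 * ζ ^ k2) := by
    linear_combination (-(ζ⁻¹ ^ k2 * ζ ^ k2)) * hi2 + (-1 : ℂ) * hik k2
  have e3 : (1 - ω3⁻¹ * ζ⁻¹ ^ k3) * (ω3 * ζ ^ k3) = -(1 - ω3 * ζ ^ k3) := by
    linear_combination (-(ζ⁻¹ ^ k3 * ζ ^ k3)) * hi3 + (-1 : ℂ) * hik k3
  have e4 : (1 - ω4⁻¹ * ζ⁻¹ ^ k4) * (ω4 * ζ ^ k4) = -(1 - ω4 * ζ ^ k4) := by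
    linear_combination (-(ζ⁻¹ ^ k4 * ζ ^ k4)) * hi4 + (-1 : ℂ) * hik k4
  have s1 : (a : ℂ) * ((1 - ω3 * ζ ^ k3) * (1 - ω4 * ζ ^ k4))
      = (1 - ω1⁻¹ * ζ⁻¹ ^ k1) * (1 - ω2⁻¹ * ζ⁻¹ ^ k2) * (ω3 * ζ ^ k3 * (ω4 * ζ ^ k4)) := by
    linear_combination (ω3 * ζ ^ k3 * (ω4 * ζ ^ k4)) * hc
      + ((a : ℂ) * (1 - ω3 * ζ ^ k3)) * e4
      - ((a : ℂ) * ((1 - ω4⁻¹ * ζ⁻¹ ^ k4) * (ω4 * ζ ^ k4))) * e3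
  have key : ((1 - ω1 * ζ ^ k1) * (1 - ω2 * ζ ^ k2)) * (ω1 * ζ ^ k1 * (ω2 * ζ ^ k2))
      = ((1 - ω1 * ζ ^ k1) * (1 - ω2 * ζ ^ k2)) * (ω3 * ζ ^ k3 * (ω4 * ζ ^ k4)) := by
    linear_combination (ω1 * ζ ^ k1 * (ω2 * ζ ^ k2)) * s1
      - (ω1 * ζ ^ k1 * (ω2 * ζ ^ k2)) * hE
      + ((ω3 * ζ ^ k3 * (ω4 * ζ ^ k4)) * ((1 - ω2⁻¹ * ζ⁻¹ ^ k2) * (ω2 * ζ ^ k2))) * e1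
      - ((ω3 * ζ ^ k3 * (ω4 * ζ ^ k4)) * (1 - ω1 * ζ ^ k1)) * e2
  have := mul_left_cancel₀ hP0 key
  linear_combination this

lemma core (K : IntermediateField ℚ ℂ) (m : ℕ) (hm : 3 ≤ m)
    (ζ : ℂ) (hζ : ∃ n : ℕ, 0 < n ∧ ζ ^ n = 1) (hζm : ζ ^ m ∈ K)
    (hdeg : Module.finrank K (IntermediateField.adjoin K {ζ}) = m)
    (ω1 ω2 ω3 ω4 : ℂ)
    (hω1 : ω1 ∈ K ∧ ∃ n : ℕ, 0 < n ∧ ω1 ^ n = 1)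
    (hω2 : ω2 ∈ K ∧ ∃ n : ℕ, 0 < n ∧ ω2 ^ n = 1)
    (hω3 : ω3 ∈ K ∧ ∃ n : ℕ, 0 < n ∧ ω3 ^ n = 1)
    (hω4 : ω4 ∈ K ∧ ∃ n : ℕ, 0 < n ∧ ω4 ^ n = 1)
    (k1 k2 k3 k4 : ℕ) (hk1 : k1 < m) (hk2 : k2 < m) (hk3 : k3 < m) (hk4 : k4 < m)
    (hg : Nat.gcd k1 m = 1)
    (hmod : (k1 + k2) % m = (k3 + k4) % m)
    (hne3 : ω3 * ζ ^ k3 ≠ 1) (hne4 : ω4 * ζ ^ k4 ≠ 1)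
    (a : ℝ) (ha0 : a ≠ 0) (ha1 : a ≠ 1) (ham1 : a ≠ -1) (haK : (a : ℂ) ∈ K)
    (hE : (a : ℂ) * ((1 - ω3 * ζ ^ k3) * (1 - ω4 * ζ ^ k4))
        = (1 - ω1 * ζ ^ k1) * (1 - ω2 * ζ ^ k2)) :
    a = 1 / 2 ∨ a = 2 := by
  obtain ⟨hζ0, hζabs, hζc⟩ := unit_facts hζ
  obtain ⟨h10, h1abs, h1c⟩ := unit_facts hω1.2
  obtain ⟨h20, h2abs, h2c⟩ := unit_facts hω2.2
  obtain ⟨h30, h3abs, h3c⟩ := unit_facts hω3.2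
  obtain ⟨h40, h4abs, h4c⟩ := unit_facts hω4.2
  have hA0 : (a : ℂ) ≠ 0 := by exact_mod_cast ha0
  have hA1 : (a : ℂ) ≠ 1 := by exact_mod_cast ha1
  have hne3' : (1 - ω3 * ζ ^ k3) ≠ 0 := sub_ne_zero.mpr (Ne.symm hne3)
  have hne4' : (1 - ω4 * ζ ^ k4) ≠ 0 := sub_ne_zero.mpr (Ne.symm hne4)
  have hP0 : (1 - ω1 * ζ ^ k1) * (1 - ω2 * ζ ^ k2) ≠ 0 := by
    rw [← hE]; exact mul_ne_zero hA0 (mul_ne_zero hne3' hne4')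
  have hR := conj_rel ζ ω1 ω2 ω3 ω4 a k1 k2 k3 k4 hζ0 hζc h10 h1c h20 h2c h30 h3c
    h40 h4c hP0 hE
  -- arithmetic setup
  have hmod2 : (k1 + k2) % m = k1 + k2 ∨ (k1 + k2) % m + m = k1 + k2 := by
    rcases Nat.lt_or_ge (k1 + k2) m with h | h
    · left; exact Nat.mod_eq_of_lt h
    · right
      have h2 : (k1 + k2) % m = (k1 + k2 - m) % m := Nat.mod_eq_sub_mod h
      have h3 : (k1 + k2 - m) % m = k1 + k2 - m := Nat.mod_eq_of_lt (by omega)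
      omega
  have hmod4 : (k3 + k4) % m = k3 + k4 ∨ (k3 + k4) % m + m = k3 + k4 := by
    rcases Nat.lt_or_ge (k3 + k4) m with h | h
    · left; exact Nat.mod_eq_of_lt h
    · right
      have h2 : (k3 + k4) % m = (k3 + k4 - m) % m := Nat.mod_eq_sub_mod h
      have h3 : (k3 + k4 - m) % m = k3 + k4 - m := Nat.mod_eq_of_lt (by omega)
      omega
  obtain ⟨s, hsm, hs12, hs34⟩ :
      ∃ s, s < m ∧ (k1 + k2 = s ∨ k1 + k2 = m + s) ∧ (k3 + k4 = s ∨ k3 + k4 = m + s) := by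
    have h1 : (k1 + k2) % m < m := Nat.mod_lt _ (by omega)
    exact ⟨(k1 + k2) % m, h1, by omega, by omega⟩
  have hk10 : k1 ≠ 0 := by
    intro h; rw [h, Nat.gcd_zero_left] at hg; omega
  have hm2k1 : m ≠ 2 * k1 := by
    intro h
    have hd : m ∣ 2 * k1 := ⟨1, by omega⟩
    have h2 : m ∣ 2 := Nat.Coprime.dvd_of_dvd_mul_right (Nat.coprime_comm.mp hg) hd
    have := Nat.le_of_dvd (by norm_num) h2
    omega
  -- power decompositions
  obtain ⟨u, hu0, huK, hz12⟩ : ∃ u : ℂ, u ≠ 0 ∧ u ∈ K ∧ ζ ^ k1 * ζ ^ k2 = u * ζ ^ s := by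
    rcases hs12 with h | h
    · exact ⟨1, one_ne_zero, one_mem _, by rw [← pow_add, h, one_mul]⟩
    · exact ⟨ζ ^ m, pow_ne_zero _ hζ0, hζm, by rw [← pow_add, h, pow_add]⟩
  obtain ⟨u', hu'0, hu'K, hz34⟩ : ∃ u' : ℂ, u' ≠ 0 ∧ u' ∈ K ∧ ζ ^ k3 * ζ ^ k4 = u' * ζ ^ s := by
    rcases hs34 with h | h
    · exact ⟨1, one_ne_zero, one_mem _, by rw [← pow_add, h, one_mul]⟩
    · exact ⟨ζ ^ m, pow_ne_zero _ hζ0, hζm, by rw [← pow_add, h, pow_add]⟩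
  have hW' : ω3 * ω4 * u' = ω1 * ω2 * u := by
    have h2 : (ω3 * ω4 * u') * ζ ^ s = (ω1 * ω2 * u) * ζ ^ s := by
      linear_combination (-1 : ℂ) * hR - ω3 * ω4 * hz34 + ω1 * ω2 * hz12
    exact mul_right_cancel₀ (pow_ne_zero s hζ0) h2
  have hW0 : ω1 * ω2 * u ≠ 0 := mul_ne_zero (mul_ne_zero h10 h20) hu0
  -- the coefficient function
  set b : ℕ → ℂ := fun j =>
    (if j = 0 then 1 - (a : ℂ) else 0) + (if j = k1 then -ω1 else 0) +
    (if j = k2 then -ω2 else 0) + (if j = k3 then (a : ℂ) * ω3 else 0) +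
    (if j = k4 then (a : ℂ) * ω4 else 0) +
    (if j = s then (ω1 * ω2 * u) * (1 - (a : ℂ)) else 0) with hb_def
  have hbK : ∀ j, b j ∈ K := by
    intro j
    rw [hb_def]
    refine add_mem (add_mem (add_mem (add_mem (add_mem ?_ ?_) ?_) ?_) ?_) ?_ <;>
      split_ifs <;>
      first
        | exact zero_mem _
        | exact sub_mem (one_mem _) haK
        | exact neg_mem hω1.1
        | exact neg_mem hω2.1
        | exact mul_mem haK hω3.1
        | exact mul_mem haK hω4.1
        | exact mul_mem (mul_mem (mul_mem hω1.1 hω2.1) huK)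
            (sub_mem (one_mem _) haK)
  have hbsum : ∑ j ∈ Finset.range m, b j * ζ ^ j = 0 := by
    have expand : ∑ j ∈ Finset.range m, b j * ζ ^ j
        = (1 - (a : ℂ)) * ζ ^ 0 + (-ω1) * ζ ^ k1 + (-ω2) * ζ ^ k2
          + ((a : ℂ) * ω3) * ζ ^ k3 + ((a : ℂ) * ω4) * ζ ^ k4
          + ((ω1 * ω2 * u) * (1 - (a : ℂ))) * ζ ^ s := by
      rw [hb_def]
      simp only [add_mul, Finset.sum_add_distrib, ite_mul, zero_mul]
      rw [Finset.sum_ite_eq' (Finset.range m) 0, Finset.sum_ite_eq' (Finset.range m) k1,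
        Finset.sum_ite_eq' (Finset.range m) k2, Finset.sum_ite_eq' (Finset.range m) k3,
        Finset.sum_ite_eq' (Finset.range m) k4, Finset.sum_ite_eq' (Finset.range m) s]
      have h0m : 0 < m := by omega
      simp [Finset.mem_range, hk1, hk2, hk3, hk4, hsm, h0m]
    rw [expand, pow_zero]
    linear_combination (-1 : ℂ) * hE - ω1 * ω2 * hz12 + (a : ℂ) * ω3 * ω4 * hz34
      + (a : ℂ) * ζ ^ s * hW'
  have hb0 := li_aux K m ζ hζ hdeg b hbK hbsum
  -- case analysis
  rcases eq_or_ne k2 k1 with hI | hk2k1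
  · -- Case I : k2 = k1
    subst hI
    have hs0 : s ≠ 0 := by omega
    have hsk1 : s ≠ k2 := by omega
    by_cases h3s : k3 = s
    · -- k4 = 0, a = 1/2
      have hk40 : k4 = 0 := by omega
      have h0 := hb0 0 (by omega)
      rw [hb_def] at h0
      have h01 : (0 : ℕ) ≠ k2 := Ne.symm hk10
      have h03 : (0 : ℕ) ≠ k3 := by omega
      have h0s : (0 : ℕ) ≠ s := Ne.symm hs0
      simp only [if_pos rfl, if_neg h01, if_neg h03, if_neg h0s, hk40, if_pos rfl,
        add_zero, zero_add, if_true] at h0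
      -- h0 : 1 - a + a * ω4 = 0
      left
      have hω4eq : ω4 = (((a - 1) / a : ℝ) : ℂ) := by
        push_cast
        rw [eq_div_iff hA0]
        linear_combination h0
      have habs : |((a - 1) / a : ℝ)| = 1 := by
        have := congrArg norm hω4eq
        rwa [h4abs, Complex.norm_real, Real.norm_eq_abs, eq_comm] at this
      rcases abs_eq (by norm_num : (0:ℝ) ≤ 1) |>.mp habs with h | h
      · rw [div_eq_iff ha0] at h; linarith
      · rw [div_eq_iff ha0] at h; linarith
    · by_cases h4s : k4 = s
      · -- k3 = 0, a = 1/2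
        have hk30 : k3 = 0 := by omega
        have h0 := hb0 0 (by omega)
        rw [hb_def] at h0
        have h01 : (0 : ℕ) ≠ k2 := Ne.symm hk10
        have h04 : (0 : ℕ) ≠ k4 := by omega
        have h0s : (0 : ℕ) ≠ s := Ne.symm hs0
        simp only [if_pos rfl, if_neg h01, if_neg h04, if_neg h0s, hk30, if_pos rfl,
          add_zero, zero_add, if_true] at h0
        left
        have hω3eq : ω3 = (((a - 1) / a : ℝ) : ℂ) := by
          push_cast
          rw [eq_div_iff hA0]
          linear_combination h0
        have habs : |((a - 1) / a : ℝ)| = 1 := by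
          have := congrArg norm hω3eq
          rwa [h3abs, Complex.norm_real, Real.norm_eq_abs, eq_comm] at this
        rcases abs_eq (by norm_num : (0:ℝ) ≤ 1) |>.mp habs with h | h
        · rw [div_eq_iff ha0] at h; linarith
        · rw [div_eq_iff ha0] at h; linarith
      · -- contradiction from coefficient at s
        exfalso
        have hsv := hb0 s hsm
        rw [hb_def] at hsv
        simp only [if_neg hs0, if_neg hsk1, if_neg (fun h : s = k3 => h3s h.symm),
          if_neg (fun h : s = k4 => h4s h.symm), if_pos rfl, add_zero, zero_add, if_true] at hsv
        rcases mul_eq_zero.mp hsv with h | h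
        · exact hW0 h
        · exact hA1 (by linear_combination -h)
  · rcases eq_or_ne k2 0 with hII | hk20
    · -- Case II : k2 = 0
      subst hII
      have hsk1 : s = k1 := by omega
      by_cases h34 : k3 = k4
      · -- a = 2
        have h30' : k3 ≠ 0 := by omega
        have h3k1 : k3 ≠ k1 := by omega
        have h0 := hb0 0 (by omega)
        rw [hb_def] at h0
        have h01 : (0 : ℕ) ≠ k1 := Ne.symm hk10
        have h03 : (0 : ℕ) ≠ k3 := Ne.symm h30'
        have h04 : (0 : ℕ) ≠ k4 := by omega
        have h0s : (0 : ℕ) ≠ s := by omega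
        simp only [if_pos rfl, if_neg h01, if_neg h03, if_neg h04, if_neg h0s,
          add_zero, zero_add, if_true] at h0
        -- h0 : 1 - a + -ω2 = 0
        right
        have hω2eq : ω2 = (((1 - a) : ℝ) : ℂ) := by
          push_cast
          linear_combination -h0
        have habs : |(1 - a : ℝ)| = 1 := by
          have := congrArg norm hω2eq
          rwa [h2abs, Complex.norm_real, Real.norm_eq_abs, eq_comm] at this
        rcases abs_eq (by norm_num : (0:ℝ) ≤ 1) |>.mp habs with h | h
        · exfalso; exact ha0 (by linarith)
        · linarith
      · by_cases hc30 : k3 = 0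
        · -- k4 = k1 : contradiction via SL with ω2, ω3
          exfalso
          have hk4k1 : k4 = k1 := by omega
          have h0 := hb0 0 (by omega)
          rw [hb_def] at h0
          have h01 : (0 : ℕ) ≠ k1 := Ne.symm hk10
          have h04 : (0 : ℕ) ≠ k4 := by omega
          have h0s : (0 : ℕ) ≠ s := by omega
          simp only [if_pos rfl, if_neg h01, if_neg h04, if_neg h0s, hc30, if_pos rfl,
            add_zero, zero_add, if_true] at h0
          -- h0 : 1 - a + -ω2 + a * ω3 = 0
          have hω31 : ω3 ≠ 1 := by rwa [hc30, pow_zero, mul_one] at hne3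
          exact SL h20 h2c h30 h3c hω31 ha0 ha1 (by push_cast; linear_combination h0)
        · by_cases h3k1 : k3 = k1
          · -- k4 = 0 : contradiction via SL with ω2, ω4
            exfalso
            have hk40 : k4 = 0 := by omega
            have h0 := hb0 0 (by omega)
            rw [hb_def] at h0
            have h01 : (0 : ℕ) ≠ k1 := Ne.symm hk10
            have h03 : (0 : ℕ) ≠ k3 := by omega
            have h0s : (0 : ℕ) ≠ s := by omega
            simp only [if_pos rfl, if_neg h01, if_neg h03, if_neg h0s, hk40, if_pos rfl,
              add_zero, zero_add, if_true] at h0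
            have hω41 : ω4 ≠ 1 := by rwa [hk40, pow_zero, mul_one] at hne4
            exact SL h20 h2c h40 h4c hω41 ha0 ha1 (by push_cast; linear_combination h0)
          · -- k3 ∉ {0, k1} : contradiction, a * ω3 = 0
            exfalso
            have hk3v := hb0 k3 hk3
            rw [hb_def] at hk3v
            have hc2 : k3 ≠ 0 := hc30
            have hcs : k3 ≠ s := by omega
            simp only [if_neg hc30, if_neg h3k1, if_neg hc2, if_neg h34, if_neg hcs,
              if_pos rfl, add_zero, zero_add, if_true] at hk3v
            exact mul_ne_zero hA0 h30 hk3v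
    · -- Case III : k2 ∉ {0, k1} : contradiction
      exfalso
      have hsk1 : s ≠ k1 := by omega
      have hk1v := hb0 k1 hk1
      rw [hb_def] at hk1v
      have hc0 : k1 ≠ 0 := hk10
      have hck2 : k1 ≠ k2 := Ne.symm hk2k1
      have hcs : k1 ≠ s := Ne.symm hsk1
      by_cases h13 : k1 = k3 <;> by_cases h14 : k1 = k4
      · -- both : impossible numerically
        omega
      · simp only [if_neg hc0, if_pos rfl, if_neg hck2, if_pos h13, if_neg h14,
          if_neg hcs, add_zero, zero_add, if_true] at hk1v
        -- hk1v : -ω1 + a * ω3 = 0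
        have : ω1 = (a : ℂ) * ω3 := by linear_combination -hk1v
        have habs := congrArg norm this
        rw [h1abs, norm_mul, h3abs, Complex.norm_real, Real.norm_eq_abs, mul_one, eq_comm] at habs
        rcases abs_eq (by norm_num : (0:ℝ) ≤ 1) |>.mp habs with h | h
        · exact ha1 h
        · exact ham1 h
      · simp only [if_neg hc0, if_pos rfl, if_neg hck2, if_neg h13, if_pos h14,
          if_neg hcs, add_zero, zero_add, if_true] at hk1v
        have : ω1 = (a : ℂ) * ω4 := by linear_combination -hk1v
        have habs := congrArg norm this
        rw [h1abs, norm_mul, h4abs, Complex.norm_real, Real.norm_eq_abs, mul_one, eq_comm] at habs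
        rcases abs_eq (by norm_num : (0:ℝ) ≤ 1) |>.mp habs with h | h
        · exact ha1 h
        · exact ham1 h
      · simp only [if_neg hc0, if_pos rfl, if_neg hck2, if_neg h13, if_neg h14,
          if_neg hcs, add_zero, zero_add, if_true] at hk1v
        exact h10 (by linear_combination -hk1v)

/-- Lemma on quotients of products (1−ωζ^k), case (a): [K(ζ):K] = m with m ≥ 3. -/
theorem ratio_in_half_two_full_degree (K : IntermediateField ℚ ℂ) (m : ℕ) (hm : 3 ≤ m)
    (ζ : ℂ) (hζ : ∃ n : ℕ, 0 < n ∧ ζ ^ n = 1) (hζm : ζ ^ m ∈ K)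
    (hdeg : Module.finrank K (IntermediateField.adjoin K {ζ}) = m)
    (ω1 ω2 ω3 ω4 : ℂ)
    (hω1 : ω1 ∈ K ∧ ∃ n : ℕ, 0 < n ∧ ω1 ^ n = 1)
    (hω2 : ω2 ∈ K ∧ ∃ n : ℕ, 0 < n ∧ ω2 ^ n = 1)
    (hω3 : ω3 ∈ K ∧ ∃ n : ℕ, 0 < n ∧ ω3 ^ n = 1)
    (hω4 : ω4 ∈ K ∧ ∃ n : ℕ, 0 < n ∧ ω4 ^ n = 1)
    (k1 k2 k3 k4 : ℕ) (hk1 : k1 ≤ m - 1) (hk2 : k2 ≤ m - 1) (hk3 : k3 ≤ m - 1)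
    (hk4 : k4 ≤ m - 1)
    (hgcd : Nat.gcd k1 m = 1 ∨ Nat.gcd k2 m = 1 ∨ Nat.gcd k3 m = 1 ∨ Nat.gcd k4 m = 1)
    (hmod : (k1 + k2) % m = (k3 + k4) % m)
    (hne3 : ω3 * ζ ^ k3 ≠ 1) (hne4 : ω4 * ζ ^ k4 ≠ 1)
    (a : ℝ) (ha0 : a ≠ 0) (ha1 : a ≠ 1) (ham1 : a ≠ -1) (haK : (a : ℂ) ∈ K)
    (haeq : (a : ℂ) = ((1 - ω1 * ζ ^ k1) * (1 - ω2 * ζ ^ k2))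
        / ((1 - ω3 * ζ ^ k3) * (1 - ω4 * ζ ^ k4))) :
    a = 1 / 2 ∨ a = 2 := by
  have hk1' : k1 < m := by omega
  have hk2' : k2 < m := by omega
  have hk3' : k3 < m := by omega
  have hk4' : k4 < m := by omega
  have hne3' : (1 - ω3 * ζ ^ k3) ≠ 0 := sub_ne_zero.mpr (Ne.symm hne3)
  have hne4' : (1 - ω4 * ζ ^ k4) ≠ 0 := sub_ne_zero.mpr (Ne.symm hne4)
  have hA0 : (a : ℂ) ≠ 0 := by exact_mod_cast ha0
  have hE : (a : ℂ) * ((1 - ω3 * ζ ^ k3) * (1 - ω4 * ζ ^ k4))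
      = (1 - ω1 * ζ ^ k1) * (1 - ω2 * ζ ^ k2) := by
    rw [haeq]
    field_simp
  have hN0 : (1 - ω1 * ζ ^ k1) * (1 - ω2 * ζ ^ k2) ≠ 0 := by
    rw [← hE]; exact mul_ne_zero hA0 (mul_ne_zero hne3' hne4')
  have hne1 : ω1 * ζ ^ k1 ≠ 1 := by
    intro h; apply hN0; rw [h, sub_self, zero_mul]
  have hne2 : ω2 * ζ ^ k2 ≠ 1 := by
    intro h; apply hN0; rw [h, sub_self, mul_zero]
  rcases hgcd with hg | hg | hg | hg
  · exact core K m hm ζ hζ hζm hdeg ω1 ω2 ω3 ω4 hω1 hω2 hω3 hω4 k1 k2 k3 k4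
      hk1' hk2' hk3' hk4' hg hmod hne3 hne4 a ha0 ha1 ham1 haK hE
  · exact core K m hm ζ hζ hζm hdeg ω2 ω1 ω3 ω4 hω2 hω1 hω3 hω4 k2 k1 k3 k4
      hk2' hk1' hk3' hk4' hg (by rwa [Nat.add_comm k2 k1]) hne3 hne4 a ha0 ha1 ham1 haK
      (by linear_combination hE)
  · have hainv0 : a⁻¹ ≠ 0 := inv_ne_zero ha0
    have hainv1 : a⁻¹ ≠ 1 := by
      exact fun h => ha1 (inv_eq_one.mp h)
    have hainvm1 : a⁻¹ ≠ -1 := by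
      intro h; apply ham1; rw [← inv_inv a, h]; norm_num
    have hKinv : ((a⁻¹ : ℝ) : ℂ) ∈ K := by push_cast; exact inv_mem haK
    have hE' : ((a⁻¹ : ℝ) : ℂ) * ((1 - ω1 * ζ ^ k1) * (1 - ω2 * ζ ^ k2))
        = (1 - ω3 * ζ ^ k3) * (1 - ω4 * ζ ^ k4) := by
      push_cast
      rw [← hE, ← mul_assoc, inv_mul_cancel₀ hA0, one_mul]
    have h := core K m hm ζ hζ hζm hdeg ω3 ω4 ω1 ω2 hω3 hω4 hω1 hω2 k3 k4 k1 k2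
      hk3' hk4' hk1' hk2' hg hmod.symm hne1 hne2 a⁻¹ hainv0 hainv1 hainvm1 hKinv hE'
    rcases h with h | h
    · right; rw [inv_eq_iff_eq_inv] at h; rw [h]; norm_num
    · left; rw [inv_eq_iff_eq_inv] at h; rw [h]; norm_num
  · have hainv0 : a⁻¹ ≠ 0 := inv_ne_zero ha0
    have hainv1 : a⁻¹ ≠ 1 := by
      exact fun h => ha1 (inv_eq_one.mp h)
    have hainvm1 : a⁻¹ ≠ -1 := by
      intro h; apply ham1; rw [← inv_inv a, h]; norm_num
    have hKinv : ((a⁻¹ : ℝ) : ℂ) ∈ K := by push_cast; exact inv_mem haK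
    have hE' : ((a⁻¹ : ℝ) : ℂ) * ((1 - ω1 * ζ ^ k1) * (1 - ω2 * ζ ^ k2))
        = (1 - ω4 * ζ ^ k4) * (1 - ω3 * ζ ^ k3) := by
      push_cast
      rw [← hE, ← mul_assoc, inv_mul_cancel₀ hA0, one_mul, mul_comm]
    have hmod' : (k4 + k3) % m = (k1 + k2) % m := by
      rw [Nat.add_comm k4 k3]; exact hmod.symm
    have h := core K m hm ζ hζ hζm hdeg ω4 ω3 ω1 ω2 hω4 hω3 hω1 hω2 k4 k3 k1 k2
      hk4' hk3' hk1' hk2' hg hmod' hne1 hne2 a⁻¹ hainv0 hainv1 hainvm1 hKinv hE'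
    rcases h with h | h
    · right; rw [inv_eq_iff_eq_inv] at h; rw [h]; norm_num
    · left; rw [inv_eq_iff_eq_inv] at h; rw [h]; norm_num
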